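/- Let q be a prime power with q = 4 or q ≥ 7, and let ρ ≥ 0 be an integer. Then the set S_ρ ∖ {A_ρ^∞} of size (ρ+1)q, obtained from Construction S by removing the point A_ρ^∞ = (0,…,0,1), is a (ρ+1)-saturating set in PG(2ρ+1, q). -/

import Mathlib

/-- `v` is a linear combination of at most `k` vectors of the set `S`. -/
def IsCombOfAtMost {F : Type} [Field F] {d : ℕ} (S : Set (Fin d → F)) (k : ℕ)
    (v : Fin d → F) : Prop :=
  ∃ (t : Finset (Fin d → F)) (c : (Fin d → F) → F),
    ↑t ⊆ S ∧ t.card ≤ k ∧ v = ∑ w ∈ t, c w • w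

/-- Every point of `PG(d-1,q)` (i.e. every nonzero vector of `F_q^d`) is a
linear combination of at most `k` vectors of `S`. -/
def SaturatesWithin {F : Type} [Field F] {d : ℕ} (S : Set (Fin d → F)) (k : ℕ) : Prop :=
  ∀ v : Fin d → F, v ≠ 0 → IsCombOfAtMost S k v

/-- `S` is a `ρ`-saturating set: every point is a linear combination of at most
`ρ+1` points of `S`, and `ρ` is the smallest value with this property. -/
def IsSaturatingSet {F : Type} [Field F] {d : ℕ} (S : Set (Fin d → F)) (ρ : ℕ) : Prop :=
  SaturatesWithin S (ρ + 1) ∧ ∀ k < ρ + 1, ¬ SaturatesWithin S k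

/-- `S` is a minimal `ρ`-saturating set: no proper subset of `S` is `ρ`-saturating. -/
def IsMinimalSaturatingSet {F : Type} [Field F] {d : ℕ} (S : Set (Fin d → F)) (ρ : ℕ) : Prop :=
  IsSaturatingSet S ρ ∧ ∀ S' ⊂ S, ¬ IsSaturatingSet S' ρ

/-- The unit vector of `F^N` whose only nonzero coordinate is a `1` in
position `k` (positions numbered from `0`). -/
def unitV (F : Type) [Field F] (N k : ℕ) : Fin N → F :=
  fun i => if (i : ℕ) = k then 1 else 0

/-- Construction S ("Line+Ovals") in `PG(2ρ+1,q)`: the point `A₀⁰ = (1,0,…,0)`,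
the truncated line `L₀* = {(1,a,0,…,0) : a ≠ 0}`, for each `u = 1,…,ρ` the
truncated conic `C_u*` (with `1` in position `2u-1`, `a` in position `2u`,
`a²` in position `2u+1`) and the point `T_u` (a `1` in position `2u`), and the
point `A_ρ^∞ = (0,…,0,1)`. -/
def constructionS (F : Type) [Field F] (ρ : ℕ) : Set (Fin (2 * ρ + 2) → F) :=
  {unitV F (2 * ρ + 2) 0}
  ∪ {w | ∃ a : F, a ≠ 0 ∧
      w = fun i : Fin (2 * ρ + 2) => if (i : ℕ) = 0 then 1 else if (i : ℕ) = 1 then a else 0}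
  ∪ {w | ∃ u : ℕ, 1 ≤ u ∧ u ≤ ρ ∧ ∃ a : F, a ≠ 0 ∧
      w = fun i : Fin (2 * ρ + 2) => if (i : ℕ) = 2 * u - 1 then 1 else if (i : ℕ) = 2 * u then a
            else if (i : ℕ) = 2 * u + 1 then a ^ 2 else 0}
  ∪ {w | ∃ u : ℕ, 1 ≤ u ∧ u ≤ ρ ∧ w = unitV F (2 * ρ + 2) (2 * u)}
  ∪ {unitV F (2 * ρ + 2) (2 * ρ + 1)}



namespace S11
variable {F : Type} [Field F]

section
variable {d : ℕ} {S : Set (Fin d → F)}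
theorem comb_zero (k : ℕ) : IsCombOfAtMost S k (0 : Fin d → F) :=
  ⟨∅, 0, by simp⟩

theorem comb_mono {k k' : ℕ} (h : k ≤ k') {v : Fin d → F}
    (hv : IsCombOfAtMost S k v) : IsCombOfAtMost S k' v := by
  obtain ⟨t, c, h1, h2, h3⟩ := hv
  exact ⟨t, c, h1, h2.trans h, h3⟩

theorem comb_add {k : ℕ} {v w : Fin d → F} (hv : IsCombOfAtMost S k v)
    (hw : w ∈ S) (c : F) : IsCombOfAtMost S (k+1) (v + c • w) := by
  classical
  obtain ⟨t, co, h1, h2, h3⟩ := hv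
  by_cases hmem : w ∈ t
  · refine ⟨t, Function.update co w (co w + c), h1, h2.trans (Nat.le_succ k), ?_⟩
    have : ∀ x ∈ t, (Function.update co w (co w + c)) x • x
        = (Function.update (fun y => co y • y) w ((co w + c) • w)) x := by
      intro x hx
      by_cases hxw : x = w
      · subst hxw; simp
      · simp [Function.update_of_ne hxw]
    rw [Finset.sum_congr rfl this, Finset.sum_update_of_mem hmem,
        Finset.sum_eq_sum_sdiff_singleton_add hmem (fun y => co y • y)] at *
    rw [h3]
    module
  · refine ⟨insert w t, Function.update co w c, ?_, ?_, ?_⟩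
    · rw [Finset.coe_insert]
      exact Set.insert_subset hw h1
    · rw [Finset.card_insert_of_notMem hmem]; omega
    · rw [Finset.sum_insert hmem]
      have : ∀ x ∈ t, (Function.update co w c) x • x = co x • x := by
        intro x hx
        have : x ≠ w := fun h => hmem (h ▸ hx)
        simp [Function.update_of_ne this]
      rw [Finset.sum_congr rfl this, Function.update_self, ← h3, add_comm]


/-- the points -/
def ptL (F : Type) [Field F] (ρ : ℕ) (a : F) : Fin (2*ρ+2) → F :=
  fun i => if (i : ℕ) = 0 then 1 else if (i : ℕ) = 1 then a else 0
def ptC (F : Type) [Field F] (ρ u : ℕ) (a : F) : Fin (2*ρ+2) → F :=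
  fun i => if (i : ℕ) = 2*u-1 then 1 else if (i : ℕ) = 2*u then a
      else if (i : ℕ) = 2*u+1 then a^2 else 0
def SS (F : Type) [Field F] (ρ : ℕ) : Set (Fin (2*ρ+2) → F) :=
  constructionS F ρ \ {unitV F (2*ρ+2) (2*ρ+1)}
end

lemma mem_constructionS_iff {ρ : ℕ} {w : Fin (2*ρ+2) → F} :
    w ∈ constructionS F ρ ↔
      w = unitV F (2*ρ+2) 0 ∨ (∃ a : F, a ≠ 0 ∧ w = ptL F ρ a)
      ∨ (∃ u : ℕ, 1 ≤ u ∧ u ≤ ρ ∧ ∃ a : F, a ≠ 0 ∧ w = ptC F ρ u a)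
      ∨ (∃ u : ℕ, 1 ≤ u ∧ u ≤ ρ ∧ w = unitV F (2*ρ+2) (2*u))
      ∨ w = unitV F (2*ρ+2) (2*ρ+1) := by
  have : w ∈ constructionS F ρ ↔
      (((w = unitV F (2*ρ+2) 0 ∨ (∃ a : F, a ≠ 0 ∧ w = ptL F ρ a))
      ∨ (∃ u : ℕ, 1 ≤ u ∧ u ≤ ρ ∧ ∃ a : F, a ≠ 0 ∧ w = ptC F ρ u a))
      ∨ (∃ u : ℕ, 1 ≤ u ∧ u ≤ ρ ∧ w = unitV F (2*ρ+2) (2*u)))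
      ∨ w = unitV F (2*ρ+2) (2*ρ+1) := Iff.rfl
  rw [this, or_assoc, or_assoc, or_assoc]

lemma fin_val_mk {n m : ℕ} (h : m < n) : ((⟨m, h⟩ : Fin n) : ℕ) = m := rfl

lemma ne_of_coord {d : ℕ} {v w : Fin d → F} (n : ℕ) (h : n < d)
    (hval : v ⟨n, h⟩ ≠ w ⟨n, h⟩) : v ≠ w := fun he => hval (by rw [he])

lemma unit_ne_top {ρ k : ℕ} (hk : k ≤ 2*ρ) :
    unitV F (2*ρ+2) k ≠ unitV F (2*ρ+2) (2*ρ+1) := by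
  apply ne_of_coord k (by omega)
  have h2 : k ≠ 2*ρ+1 := by omega
  simp [unitV, h2]

lemma ptL_ne_top {ρ : ℕ} (a : F) : ptL F ρ a ≠ unitV F (2*ρ+2) (2*ρ+1) := by
  apply ne_of_coord 0 (by omega)
  have h2 : (0:ℕ) ≠ 2*ρ+1 := by omega
  simp [ptL, unitV, h2]

lemma ptC_ne_top {ρ u : ℕ} (hu : 1 ≤ u) (hu2 : u ≤ ρ) (a : F) :
    ptC F ρ u a ≠ unitV F (2*ρ+2) (2*ρ+1) := by
  apply ne_of_coord (2*u-1) (by omega)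
  have h2 : 2*u-1 ≠ 2*ρ+1 := by omega
  simp [ptC, unitV, h2]

lemma pt0_mem {ρ : ℕ} : unitV F (2*ρ+2) 0 ∈ SS F ρ :=
  ⟨mem_constructionS_iff.2 (Or.inl rfl), by simpa using unit_ne_top (by omega)⟩
lemma ptL_mem {ρ : ℕ} {a : F} (ha : a ≠ 0) : ptL F ρ a ∈ SS F ρ :=
  ⟨mem_constructionS_iff.2 (Or.inr (Or.inl ⟨a, ha, rfl⟩)), by simpa using ptL_ne_top a⟩
lemma ptC_mem {ρ u : ℕ} {a : F} (hu : 1 ≤ u) (hu2 : u ≤ ρ) (ha : a ≠ 0) :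
    ptC F ρ u a ∈ SS F ρ :=
  ⟨mem_constructionS_iff.2 (Or.inr (Or.inr (Or.inl ⟨u, hu, hu2, a, ha, rfl⟩))),
    by simpa using ptC_ne_top hu hu2 a⟩
lemma ptT_mem {ρ u : ℕ} (hu : 1 ≤ u) (hu2 : u ≤ ρ) :
    unitV F (2*ρ+2) (2*u) ∈ SS F ρ :=
  ⟨mem_constructionS_iff.2 (Or.inr (Or.inr (Or.inr (Or.inl ⟨u, hu, hu2, rfl⟩)))),
    by simpa using unit_ne_top (by omega)⟩

/-- maps -/
def upd (ρ : ℕ) (v : Fin (2*ρ+2) → F) (z : F) : Fin (2*ρ+2) → F :=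
  fun i => if (i : ℕ) = 2*ρ+1 then z else v i
def iot (ρ : ℕ) (w : Fin (2*ρ+2) → F) : Fin (2*(ρ+1)+2) → F :=
  fun i => if h : (i : ℕ) < 2*ρ+2 then w ⟨i, h⟩ else 0
def res (ρ : ℕ) (v : Fin (2*(ρ+1)+2) → F) : Fin (2*ρ+2) → F :=
  fun i => v (Fin.castLE (by omega) i)
def low (ρ : ℕ) (v : Fin (2*(ρ+1)+2) → F) (y : F) : Fin (2*ρ+2) → F :=
  upd ρ (res ρ v) y

lemma res_iot {ρ : ℕ} (w : Fin (2*ρ+2) → F) : res ρ (iot ρ w) = w := by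
  funext i
  simp only [res, iot, Fin.coe_castLE, Fin.is_lt, dif_pos, Fin.eta]

lemma iot_inj {ρ : ℕ} : Function.Injective (iot (F := F) ρ) := by
  intro a b h
  rw [← res_iot (ρ := ρ) a, ← res_iot (ρ := ρ) b, h]

lemma res_sum {ρ : ℕ} (t : Finset (Fin (2*(ρ+1)+2) → F)) (c : (Fin (2*(ρ+1)+2) → F) → F) :
    res ρ (∑ w ∈ t, c w • w) = ∑ w ∈ t, c w • res ρ w := by
  funext i
  simp only [res, Finset.sum_apply, Pi.smul_apply]

lemma iot_sum {ρ : ℕ} (t : Finset (Fin (2*ρ+2) → F)) (c : (Fin (2*ρ+2) → F) → F) :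
    iot ρ (∑ w ∈ t, c w • w) = ∑ w ∈ t, c w • iot ρ w := by
  funext i
  by_cases h : (i : ℕ) < 2*ρ+2
  · simp only [iot, dif_pos h, Finset.sum_apply, Pi.smul_apply]
  · simp only [iot, dif_neg h, Finset.sum_apply, Pi.smul_apply, smul_eq_mul, mul_zero,
      Finset.sum_const_zero]

lemma comb_subset {d : ℕ} {S S' : Set (Fin d → F)} (h : S ⊆ S') {k : ℕ} {v : Fin d → F}
    (hv : IsCombOfAtMost S k v) : IsCombOfAtMost S' k v := by
  obtain ⟨t, c, h1, h2, h3⟩ := hv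
  exact ⟨t, c, h1.trans h, h2, h3⟩

lemma comb_iot {ρ : ℕ} {S : Set (Fin (2*ρ+2) → F)} {k : ℕ} {v : Fin (2*ρ+2) → F}
    (hv : IsCombOfAtMost S k v) : IsCombOfAtMost (iot ρ '' S) k (iot ρ v) := by
  classical
  obtain ⟨t, c, h1, h2, h3⟩ := hv
  refine ⟨t.image (iot ρ), fun w' => c (res ρ w'), ?_, ?_, ?_⟩
  · intro w' hw'
    simp only [Finset.coe_image] at hw'
    obtain ⟨w, hw, rfl⟩ := hw'
    exact ⟨w, h1 hw, rfl⟩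
  · exact (Finset.card_image_le).trans h2
  · rw [Finset.sum_image (fun a _ b _ h => iot_inj h), h3, iot_sum]
    exact Finset.sum_congr rfl fun w _ => by simp [res_iot]



lemma iot_pt0 {ρ : ℕ} : iot ρ (unitV F (2*ρ+2) 0) = unitV F (2*(ρ+1)+2) 0 := by
  funext i
  by_cases h : (i : ℕ) < 2*ρ+2
  · simp [iot, h, unitV]
  · have h2 : (i:ℕ) ≠ 0 := by omega
    simp [iot, h, unitV, h2]

lemma iot_ptL {ρ : ℕ} (a : F) : iot ρ (ptL F ρ a) = ptL F (ρ+1) a := by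
  funext i
  by_cases h : (i : ℕ) < 2*ρ+2
  · simp [iot, h, ptL]
  · have h2 : (i:ℕ) ≠ 0 := by omega
    have h3 : (i:ℕ) ≠ 1 := by omega
    simp [iot, h, ptL, h2, h3]

lemma iot_ptC {ρ u : ℕ} (hu2 : u ≤ ρ) (a : F) :
    iot ρ (ptC F ρ u a) = ptC F (ρ+1) u a := by
  funext i
  by_cases h : (i : ℕ) < 2*ρ+2
  · simp [iot, h, ptC]
  · have h2 : (i:ℕ) ≠ 2*u-1 := by omega
    have h3 : (i:ℕ) ≠ 2*u := by omega
    have h4 : (i:ℕ) ≠ 2*u+1 := by omega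
    simp [iot, h, ptC, h2, h3, h4]

lemma iot_ptT {ρ u : ℕ} (hu2 : u ≤ ρ) :
    iot ρ (unitV F (2*ρ+2) (2*u)) = unitV F (2*(ρ+1)+2) (2*u) := by
  funext i
  by_cases h : (i : ℕ) < 2*ρ+2
  · simp [iot, h, unitV]
  · have h2 : (i:ℕ) ≠ 2*u := by omega
    simp [iot, h, unitV, h2]

lemma iot_SS {ρ : ℕ} : iot ρ '' SS F ρ ⊆ SS F (ρ+1) := by
  rintro p ⟨q, ⟨hq1, hq2⟩, rfl⟩
  simp only [Set.mem_singleton_iff] at hq2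
  rcases mem_constructionS_iff.1 hq1 with h | ⟨a, ha, h⟩ | ⟨u, hu, hu2, a, ha, h⟩
    | ⟨u, hu, hu2, h⟩ | h
  · rw [h, iot_pt0]; exact pt0_mem
  · rw [h, iot_ptL]; exact ptL_mem ha
  · rw [h, iot_ptC hu2]; exact ptC_mem hu (by omega) ha
  · rw [h, iot_ptT hu2]; exact ptT_mem hu (by omega)
  · exact absurd h hq2

lemma glue {ρ : ℕ} (v B : Fin (2*(ρ+1)+2) → F) (s z : F)
    (hlow : ∀ i : Fin (2*(ρ+1)+2), (i:ℕ) ≤ 2*ρ → B i = 0)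
    (hs : B ⟨2*ρ+1, by omega⟩ = s)
    (hxe : B ⟨2*ρ+2, by omega⟩ = v ⟨2*ρ+2, by omega⟩)
    (hz : B ⟨2*ρ+3, by omega⟩ = z) :
    upd (ρ+1) v z
      = iot ρ (low ρ v (v ⟨2*ρ+1, by omega⟩ - s)) + B := by
  funext i
  simp only [Pi.add_apply, upd, iot, low, res]
  rcases Nat.lt_or_ge (i : ℕ) (2*ρ+2) with h | h
  · rw [dif_pos h]
    have hne : (i:ℕ) ≠ 2*(ρ+1)+1 := by omega
    rw [if_neg hne]
    show v i = (if ((⟨(i:ℕ), h⟩ : Fin (2*ρ+2)) : ℕ) = 2*ρ+1 then _ else _) + B i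
    by_cases h1 : (i:ℕ) = 2*ρ+1
    · have hBi : B i = s := by
        have : i = ⟨2*ρ+1, by omega⟩ := Fin.ext h1
        rw [this]; exact hs
      rw [if_pos h1, hBi, sub_add_cancel]
      congr 1
      exact Fin.ext h1
    · have hBi : B i = 0 := hlow i (by omega)
      rw [if_neg h1, hBi, add_zero]
      exact congrArg v (Fin.ext rfl)
  · rw [dif_neg (by omega), zero_add]
    by_cases h1 : (i:ℕ) = 2*ρ+3
    · have hi : i = ⟨2*ρ+3, by omega⟩ := Fin.ext h1
      have h2 : (i:ℕ) = 2*(ρ+1)+1 := by omega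
      rw [if_pos h2, hi]; exact hz.symm
    · have h2 : (i:ℕ) = 2*ρ+2 := by omega
      have hi : i = ⟨2*ρ+2, by omega⟩ := Fin.ext h2
      rw [if_neg (by omega), hi]; exact hxe.symm




lemma ptC_top_apply {ρ : ℕ} (a : F) (i : Fin (2*(ρ+1)+2)) :
    ptC F (ρ+1) (ρ+1) a i = if (i:ℕ) = 2*ρ+1 then 1 else if (i:ℕ) = 2*ρ+2 then a
      else if (i:ℕ) = 2*ρ+3 then a^2 else 0 := by
  simp only [ptC, show 2*(ρ+1)-1 = 2*ρ+1 from by omega, show 2*(ρ+1) = 2*ρ+2 from by omega,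
    show 2*ρ+2+1 = 2*ρ+3 from by omega, show 2*ρ+2-1 = 2*ρ+1 from by omega]

lemma ptT_top_apply {ρ : ℕ} (i : Fin (2*(ρ+1)+2)) :
    unitV F (2*(ρ+1)+2) (2*(ρ+1)) i = if (i:ℕ) = 2*ρ+2 then 1 else 0 := by
  simp only [unitV, show 2*(ρ+1) = 2*ρ+2 from by omega]


lemma ptC_top_s {ρ : ℕ} (a : F) : ptC F (ρ+1) (ρ+1) a ⟨2*ρ+1, by omega⟩ = 1 := by
  have n : (2*ρ+1 : ℕ) = 2*ρ+1 := rfl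
  simp [ptC_top_apply]
lemma ptC_top_e {ρ : ℕ} (a : F) : ptC F (ρ+1) (ρ+1) a ⟨2*ρ+2, by omega⟩ = a := by
  have n : (2*ρ+2 : ℕ) ≠ 2*ρ+1 := by omega
  simp [ptC_top_apply, n]
lemma ptC_top_z {ρ : ℕ} (a : F) : ptC F (ρ+1) (ρ+1) a ⟨2*ρ+3, by omega⟩ = a^2 := by
  have n1 : (2*ρ+3 : ℕ) ≠ 2*ρ+1 := by omega
  have n2 : (2*ρ+3 : ℕ) ≠ 2*ρ+2 := by omega
  simp [ptC_top_apply, n1, n2]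
lemma ptT_top_s {ρ : ℕ} : unitV F (2*(ρ+1)+2) (2*(ρ+1)) ⟨2*ρ+1, by omega⟩ = 0 := by
  have n : (2*ρ+1 : ℕ) ≠ 2*ρ+2 := by omega
  simp [ptT_top_apply, n]
lemma ptT_top_e {ρ : ℕ} : unitV F (2*(ρ+1)+2) (2*(ρ+1)) ⟨2*ρ+2, by omega⟩ = 1 := by
  simp [ptT_top_apply]
lemma ptT_top_z {ρ : ℕ} : unitV F (2*(ρ+1)+2) (2*(ρ+1)) ⟨2*ρ+3, by omega⟩ = 0 := by
  have n : (2*ρ+3 : ℕ) ≠ 2*ρ+2 := by omega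
  simp [ptT_top_apply, n]

/-- Route R0 -/
lemma routeR0 {ρ k : ℕ} (v : Fin (2*(ρ+1)+2) → F)
    (hxe : v ⟨2*ρ+2, by omega⟩ = 0)
    (h : IsCombOfAtMost (SS F ρ) k (low ρ v (v ⟨2*ρ+1, by omega⟩))) :
    IsCombOfAtMost (SS F (ρ+1)) k (upd (ρ+1) v 0) := by
  have e := glue (F := F) (ρ := ρ) v 0 0 0 (by intro i _; rfl) rfl (by simp [hxe]) rfl
  rw [sub_zero] at e
  rw [e, add_zero]
  exact comb_subset iot_SS (comb_iot h)

/-- Route RT -/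
lemma routeRT {ρ k : ℕ} (v : Fin (2*(ρ+1)+2) → F)
    (h : IsCombOfAtMost (SS F ρ) k (low ρ v (v ⟨2*ρ+1, by omega⟩))) :
    IsCombOfAtMost (SS F (ρ+1)) (k+1) (upd (ρ+1) v 0) := by
  have n1 : (2*ρ+1 : ℕ) ≠ 2*ρ+2 := by omega
  have n3 : (2*ρ+3 : ℕ) ≠ 2*ρ+2 := by omega
  have e := glue (F := F) (ρ := ρ) v
      ((v ⟨2*ρ+2, by omega⟩) • unitV F (2*(ρ+1)+2) (2*(ρ+1))) 0 0
      (by intro i hi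
          have : (i:ℕ) ≠ 2*ρ+2 := by omega
          simp [ptT_top_apply, this])
      (by simp [ptT_top_s]) (by simp [ptT_top_e]) (by simp [ptT_top_z])
  rw [sub_zero] at e
  rw [e]
  exact comb_add (comb_subset iot_SS (comb_iot h)) (ptT_mem (by omega) (by omega)) _

/-- Route RC -/
lemma routeRC {ρ k : ℕ} (v : Fin (2*(ρ+1)+2) → F) (z : F) (hz : z ≠ 0)
    (hxe : v ⟨2*ρ+2, by omega⟩ ≠ 0)
    (h : IsCombOfAtMost (SS F ρ) k
      (low ρ v (v ⟨2*ρ+1, by omega⟩ - (v ⟨2*ρ+2, by omega⟩)^2 / z))) :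
    IsCombOfAtMost (SS F (ρ+1)) (k+1) (upd (ρ+1) v z) := by
  have n21 : (2*ρ+2 : ℕ) ≠ 2*ρ+1 := by omega
  have n31 : (2*ρ+3 : ℕ) ≠ 2*ρ+1 := by omega
  have n32 : (2*ρ+3 : ℕ) ≠ 2*ρ+2 := by omega
  set xe := v ⟨2*ρ+2, by omega⟩ with hxedef
  have e := glue (F := F) (ρ := ρ) v
      ((xe^2/z) • ptC F (ρ+1) (ρ+1) (z/xe)) (xe^2/z) z
      (by intro i hi
          have i1 : (i:ℕ) ≠ 2*ρ+1 := by omega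
          have i2 : (i:ℕ) ≠ 2*ρ+2 := by omega
          have i3 : (i:ℕ) ≠ 2*ρ+3 := by omega
          simp [ptC_top_apply, i1, i2, i3])
      (by simp [ptC_top_s])
      (by simp only [Pi.smul_apply, ptC_top_e, smul_eq_mul]
          field_simp
          rw [← hxedef])
      (by simp only [Pi.smul_apply, ptC_top_z, smul_eq_mul]
          field_simp)
  rw [e]
  exact comb_add (comb_subset iot_SS (comb_iot h))
    (ptC_mem (by omega) (by omega) (div_ne_zero hz hxe)) _

/-- Route R2 : xe = 0, two conics, arbitrary s ≠ 0 emitted -/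
lemma routeR2 {ρ k : ℕ} (v : Fin (2*(ρ+1)+2) → F) (z s : F) (hz : z ≠ 0) (hs : s ≠ 0)
    (a b : F) (ha : a ≠ 0) (hb : b ≠ 0) (hab : a ≠ b) (hm : a * b = -(z/s))
    (hxe : v ⟨2*ρ+2, by omega⟩ = 0)
    (h : IsCombOfAtMost (SS F ρ) k (low ρ v (v ⟨2*ρ+1, by omega⟩ - s))) :
    IsCombOfAtMost (SS F (ρ+1)) (k+2) (upd (ρ+1) v z) := by
  have n21 : (2*ρ+2 : ℕ) ≠ 2*ρ+1 := by omega
  have n31 : (2*ρ+3 : ℕ) ≠ 2*ρ+1 := by omega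
  have n32 : (2*ρ+3 : ℕ) ≠ 2*ρ+2 := by omega
  have hab' : a - b ≠ 0 := sub_ne_zero.2 hab
  have e := glue (F := F) (ρ := ρ) v
      ((z/(a*(a-b))) • ptC F (ρ+1) (ρ+1) a + (-(z/(b*(a-b)))) • ptC F (ρ+1) (ρ+1) b) s z
      (by intro i hi
          have i1 : (i:ℕ) ≠ 2*ρ+1 := by omega
          have i2 : (i:ℕ) ≠ 2*ρ+2 := by omega
          have i3 : (i:ℕ) ≠ 2*ρ+3 := by omega
          simp [ptC_top_apply, i1, i2, i3])
      (by simp only [Pi.add_apply, Pi.smul_apply, ptC_top_s, smul_eq_mul, mul_one]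
          have hzs : z = -(s * (a*b)) := by rw [hm]; field_simp
          rw [hzs]; field_simp; ring)
      (by simp only [Pi.add_apply, Pi.smul_apply, ptC_top_e, smul_eq_mul]
          rw [hxe]; field_simp; ring)
      (by simp only [Pi.add_apply, Pi.smul_apply, ptC_top_z, smul_eq_mul]
          field_simp; ring)
  rw [e, ← add_assoc]
  exact comb_add (comb_add (comb_subset iot_SS (comb_iot h))
    (ptC_mem (by omega) (by omega) ha) _) (ptC_mem (by omega) (by omega) hb) _

/-- Route R3 : xe = 0, three conics, s = 0 emitted -/
lemma routeR3 {ρ k : ℕ} (v : Fin (2*(ρ+1)+2) → F) (z : F)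
    (a b c : F) (ha : a ≠ 0) (hb : b ≠ 0) (hc : c ≠ 0)
    (hab : a ≠ b) (hac : a ≠ c) (hbc : b ≠ c)
    (hxe : v ⟨2*ρ+2, by omega⟩ = 0)
    (h : IsCombOfAtMost (SS F ρ) k (low ρ v (v ⟨2*ρ+1, by omega⟩))) :
    IsCombOfAtMost (SS F (ρ+1)) (k+3) (upd (ρ+1) v z) := by
  have n21 : (2*ρ+2 : ℕ) ≠ 2*ρ+1 := by omega
  have n31 : (2*ρ+3 : ℕ) ≠ 2*ρ+1 := by omega
  have n32 : (2*ρ+3 : ℕ) ≠ 2*ρ+2 := by omega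
  have hab' : a - b ≠ 0 := sub_ne_zero.2 hab
  have hac' : a - c ≠ 0 := sub_ne_zero.2 hac
  have hbc' : b - c ≠ 0 := sub_ne_zero.2 hbc
  have e := glue (F := F) (ρ := ρ) v
      ((z/((a-b)*(a-c))) • ptC F (ρ+1) (ρ+1) a
        + (-(z/((a-b)*(b-c)))) • ptC F (ρ+1) (ρ+1) b
        + (z/((a-c)*(b-c))) • ptC F (ρ+1) (ρ+1) c) 0 z
      (by intro i hi
          have i1 : (i:ℕ) ≠ 2*ρ+1 := by omega
          have i2 : (i:ℕ) ≠ 2*ρ+2 := by omega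
          have i3 : (i:ℕ) ≠ 2*ρ+3 := by omega
          simp [ptC_top_apply, i1, i2, i3])
      (by simp only [Pi.add_apply, Pi.smul_apply, ptC_top_s, smul_eq_mul, mul_one]
          field_simp; ring)
      (by simp only [Pi.add_apply, Pi.smul_apply, ptC_top_e, smul_eq_mul]
          rw [hxe]; field_simp; ring)
      (by simp only [Pi.add_apply, Pi.smul_apply, ptC_top_z, smul_eq_mul]
          field_simp; ring)
  rw [sub_zero] at e
  rw [e, ← add_assoc, ← add_assoc]
  exact comb_add (comb_add (comb_add (comb_subset iot_SS (comb_iot h))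
    (ptC_mem (by omega) (by omega) ha) _) (ptC_mem (by omega) (by omega) hb) _)
    (ptC_mem (by omega) (by omega) hc) _

/-! ### auxiliary field facts -/

def Three (F : Type) [Field F] : Prop :=
  ∃ a b c : F, a ≠ 0 ∧ b ≠ 0 ∧ c ≠ 0 ∧ a ≠ b ∧ a ≠ c ∧ b ≠ c

lemma sq_eq_neg {x y : F} (h : x^2 = y^2) (hne : x ≠ y) : x = -y := by
  have h0 : (x - y) * (x + y) = 0 := by linear_combination h
  rcases mul_eq_zero.1 h0 with h' | h'
  · exact absurd (sub_eq_zero.1 h') hne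
  · exact add_eq_zero_iff_eq_neg.1 h' 

lemma exists_prod (h3 : Three F) {m : F} (hm : m ≠ 0) :
    ∃ a b : F, a ≠ 0 ∧ b ≠ 0 ∧ a ≠ b ∧ a * b = m := by
  obtain ⟨a, b, c, ha, hb, hc, hab, hac, hbc⟩ := h3
  have key : ∃ x : F, x ≠ 0 ∧ x^2 ≠ m := by
    by_cases h1 : a^2 = m
    · by_cases h2 : b^2 = m
      · refine ⟨c, hc, fun h3' => ?_⟩
        have hb' : b = -a := sq_eq_neg (h2.trans h1.symm) (Ne.symm hab)
        have hc' : c = -a := sq_eq_neg (h3'.trans h1.symm) (Ne.symm hac)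
        exact hbc (hb'.trans hc'.symm)
      · exact ⟨b, hb, h2⟩
    · exact ⟨a, ha, h1⟩
  obtain ⟨x, hx, hx2⟩ := key
  refine ⟨x, m/x, hx, div_ne_zero hm hx, fun he => hx2 ?_, by field_simp⟩
  have hxm : x * (m / x) = m := by field_simp
  rw [pow_two]
  nth_rewrite 2 [he]
  exact hxm

/-! ### the three invariants -/

def UD (F : Type) [Field F] (ρ : ℕ) : Prop :=
  ∀ v : Fin (2*ρ+2) → F, IsCombOfAtMost (SS F ρ) (ρ+2) v
def UH (F : Type) [Field F] (ρ : ℕ) : Prop :=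
  ∀ v : Fin (2*ρ+2) → F,
    (∃ z1 z2 : F, z1 ≠ z2 ∧ IsCombOfAtMost (SS F ρ) (ρ+1) (upd ρ v z1)
      ∧ IsCombOfAtMost (SS F ρ) (ρ+1) (upd ρ v z2))
    ∨ ∃ z : F, IsCombOfAtMost (SS F ρ) ρ (upd ρ v z)
def UN (F : Type) [Field F] (ρ : ℕ) : Prop :=
  ∀ (v : Fin (2*ρ+2) → F) (w : F),
    IsCombOfAtMost (SS F ρ) (ρ+1) (upd ρ v w)
    ∨ ∃ z : F, z ≠ w ∧ IsCombOfAtMost (SS F ρ) ρ (upd ρ v z)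

lemma upd_low {ρ : ℕ} (v : Fin (2*(ρ+1)+2) → F) (y z : F) :
    upd ρ (low ρ v y) z = low ρ v z := by
  funext i
  simp only [upd, low, res]
  by_cases h : (i:ℕ) = 2*ρ+1 <;> simp [h]

lemma upd_self {ρ : ℕ} (v : Fin (2*ρ+2) → F) :
    upd ρ v (v ⟨2*ρ+1, by omega⟩) = v := by
  funext i
  simp only [upd]
  by_cases h : (i:ℕ) = 2*ρ+1
  · rw [if_pos h]
    exact (congrArg v (Fin.ext h)).symm
  · rw [if_neg h]

lemma comb_single {d : ℕ} {S : Set (Fin d → F)} {w : Fin d → F} (hw : w ∈ S)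
    {v : Fin d → F} (c : F) (h : v = c • w) : IsCombOfAtMost S 1 v := by
  have := comb_add (comb_zero (S := S) 0) hw c
  rw [h]
  simpa using this

lemma div_div_self₂ {x s : F} (hx : x ≠ 0) (hs : s ≠ 0) : x^2/(x^2/s) = s := by
  field_simp

lemma div_ne_div {x s1 s2 : F} (hx : x ≠ 0) (hs1 : s1 ≠ 0) (hs2 : s2 ≠ 0)
    (h : s1 ≠ s2) : x^2/s1 ≠ x^2/s2 := by
  intro he
  apply h
  have e1 : s1 = x^2/(x^2/s1) := (div_div_self₂ hx hs1).symm
  rw [e1, he, div_div_self₂ hx hs2]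

/-! ### base case ρ = 0 -/

lemma base_upd_pt0 (v : Fin (2*0+2) → F) :
    upd 0 v 0 = (v ⟨0, by omega⟩) • unitV F (2*0+2) 0 := by
  funext i
  rcases (by omega : (i:ℕ) = 0 ∨ (i:ℕ) = 1) with h | h
  · rw [show i = ⟨0, by omega⟩ from Fin.ext h]
    simp [upd, unitV]
  · rw [show i = ⟨1, by omega⟩ from Fin.ext h]
    simp [upd, unitV]

lemma base_upd_ptL (v : Fin (2*0+2) → F) (z : F) (h0 : v ⟨0, by omega⟩ ≠ 0) :
    upd 0 v z = (v ⟨0, by omega⟩) • ptL F 0 (z / v ⟨0, by omega⟩) := by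
  funext i
  rcases (by omega : (i:ℕ) = 0 ∨ (i:ℕ) = 1) with h | h
  · rw [show i = ⟨0, by omega⟩ from Fin.ext h]
    simp [upd, ptL]
  · rw [show i = ⟨1, by omega⟩ from Fin.ext h]
    have h0' : v 0 ≠ 0 := h0
    simp [upd, ptL]
    rw [mul_div_cancel₀ _ h0']

lemma base_self_pt0 (v : Fin (2*0+2) → F) (h1 : v ⟨1, by omega⟩ = 0) :
    v = (v ⟨0, by omega⟩) • unitV F (2*0+2) 0 := by
  funext i
  rcases (by omega : (i:ℕ) = 0 ∨ (i:ℕ) = 1) with h | h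
  · rw [show i = ⟨0, by omega⟩ from Fin.ext h]
    simp [unitV]
  · rw [show i = ⟨1, by omega⟩ from Fin.ext h]
    simp [unitV]
    exact h1

lemma base_self_pair (v : Fin (2*0+2) → F) :
    v = 0 + (1:F) • ptL F 0 (v ⟨1, by omega⟩) + (v ⟨0, by omega⟩ - 1) • unitV F (2*0+2) 0 := by
  funext i
  rcases (by omega : (i:ℕ) = 0 ∨ (i:ℕ) = 1) with h | h
  · rw [show i = ⟨0, by omega⟩ from Fin.ext h]
    simp [ptL, unitV]
  · rw [show i = ⟨1, by omega⟩ from Fin.ext h]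
    simp [ptL, unitV]

lemma baseUD : UD F 0 := by
  intro v
  by_cases h1 : v ⟨1, by omega⟩ = 0
  · exact comb_mono (by omega) (comb_single pt0_mem _ (base_self_pt0 v h1))
  · have h := comb_add (comb_add (comb_zero (S := SS F 0) 0) (ptL_mem h1) 1)
      pt0_mem (v ⟨0, by omega⟩ - 1)
    rw [← base_self_pair v] at h
    exact h

lemma baseUH : UH F 0 := by
  intro v
  by_cases h0 : v ⟨0, by omega⟩ = 0
  · right
    refine ⟨0, ?_⟩
    have e : upd 0 v 0 = 0 := by
      rw [base_upd_pt0 v, h0, zero_smul]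
    rw [e]
    exact comb_zero 0
  · left
    refine ⟨0, 1, zero_ne_one, ?_, ?_⟩
    · exact comb_single pt0_mem _ (base_upd_pt0 v)
    · exact comb_single (ptL_mem (div_ne_zero one_ne_zero h0)) _ (base_upd_ptL v 1 h0)

lemma baseUN : UN F 0 := by
  intro v w
  by_cases h0 : v ⟨0, by omega⟩ = 0
  · have e : upd 0 v 0 = 0 := by rw [base_upd_pt0 v, h0, zero_smul]
    by_cases hw : w = 0
    · left
      rw [hw, e]
      exact comb_zero _
    · right
      exact ⟨0, Ne.symm hw, by rw [e]; exact comb_zero _⟩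
  · left
    by_cases hw : w = 0
    · rw [hw]
      exact comb_single pt0_mem _ (base_upd_pt0 v)
    · exact comb_single (ptL_mem (div_ne_zero hw h0)) _ (base_upd_ptL v w h0)

/-! ### induction step -/

theorem comb_mono' {d : ℕ} {S : Set (Fin d → F)} {k k' : ℕ} {v : Fin d → F}
    (hv : IsCombOfAtMost S k v) (h : k ≤ k') : IsCombOfAtMost S k' v :=
  comb_mono h hv

lemma comb_low_congr {ρ k : ℕ} {v : Fin (2*(ρ+1)+2) → F} {y y' : F} (e : y = y')
    (h : IsCombOfAtMost (SS F ρ) k (low ρ v y)) :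
    IsCombOfAtMost (SS F ρ) k (low ρ v y') := e ▸ h

lemma stepUD {ρ : ℕ} (h3 : Three F) (ud : UD F ρ) (uh : UH F ρ) : UD F (ρ+1) := by
  intro v
  have hv := upd_self (ρ := ρ+1) v
  rw [← hv]
  set z := v ⟨2*(ρ+1)+1, by omega⟩ with hzdef
  set xo := v ⟨2*ρ+1, by omega⟩ with hxodef
  have IHuh := uh (low ρ v 0)
  simp only [upd_low] at IHuh
  by_cases hz : z = 0
  · rw [hz]
    exact comb_mono' (routeRT v (comb_low_congr (by rw [← hxodef]) (ud _))) (by omega)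
  · by_cases hxe : v ⟨2*ρ+2, by omega⟩ = 0
    · rcases IHuh with ⟨z1, z2, h12, hc1, hc2⟩ | ⟨z0, hc0⟩
      · obtain ⟨z', hz', hcomb⟩ : ∃ z', z' ≠ xo ∧ IsCombOfAtMost (SS F ρ) (ρ+1) (low ρ v z') := by
          by_cases h1 : z1 = xo
          · exact ⟨z2, by rw [← h1]; exact (Ne.symm h12), hc2⟩
          · exact ⟨z1, h1, hc1⟩
        have hs : xo - z' ≠ 0 := sub_ne_zero.2 (Ne.symm hz')
        obtain ⟨a, b, ha, hb, hab, hm⟩ :=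
          exists_prod h3 (neg_ne_zero.2 (div_ne_zero hz hs)) (m := -(z/(xo - z')))
        exact comb_mono' (routeR2 v z (xo - z') hz hs a b ha hb hab hm hxe
          (comb_low_congr (by rw [← hxodef]; ring) hcomb)) (by omega)
      · by_cases h0 : z0 = xo
        · obtain ⟨a, b, c, ha, hb, hc, hab, hac, hbc⟩ := h3
          exact comb_mono' (routeR3 v z a b c ha hb hc hab hac hbc hxe
            (comb_low_congr (by rw [← hxodef, ← h0]) hc0)) (by omega)
        · have hs : xo - z0 ≠ 0 := sub_ne_zero.2 (Ne.symm h0)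
          obtain ⟨a, b, ha, hb, hab, hm⟩ :=
            exists_prod h3 (neg_ne_zero.2 (div_ne_zero hz hs)) (m := -(z/(xo - z0)))
          exact comb_mono' (routeR2 v z (xo - z0) hz hs a b ha hb hab hm hxe
            (comb_low_congr (by rw [← hxodef]; ring) hc0)) (by omega)
    · exact comb_mono' (routeRC v z hz hxe (ud _)) (by omega)

lemma stepUH {ρ : ℕ} (h3 : Three F) (ud : UD F ρ) (uh : UH F ρ) (un : UN F ρ) :
    UH F (ρ+1) := by
  intro v
  set xo := v ⟨2*ρ+1, by omega⟩ with hxodef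
  set xe := v ⟨2*ρ+2, by omega⟩ with hxedef
  have IHuh := uh (low ρ v 0)
  simp only [upd_low] at IHuh
  have IHun := un (low ρ v 0) xo
  simp only [upd_low] at IHun
  by_cases hxe0 : xe = 0
  · rcases IHun with hc | ⟨z', hz', hc⟩
    · right
      exact ⟨0, routeR0 v hxe0 (comb_low_congr (by rw [← hxodef]) hc)⟩
    · left
      have hs : xo - z' ≠ 0 := sub_ne_zero.2 (Ne.symm hz')
      obtain ⟨a, b, c, ha, hb, hc', hab, hac, hbc⟩ := h3
      have mk : ∀ zz : F, zz ≠ 0 →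
          IsCombOfAtMost (SS F (ρ+1)) (ρ+1+1) (upd (ρ+1) v zz) := by
        intro zz hzz
        obtain ⟨a', b', ha', hb', hab', hm'⟩ :=
          exists_prod ⟨a, b, c, ha, hb, hc', hab, hac, hbc⟩
            (neg_ne_zero.2 (div_ne_zero hzz hs)) (m := -(zz/(xo - z')))
        exact comb_mono' (routeR2 v zz (xo - z') hzz hs a' b' ha' hb' hab' hm' hxe0
          (comb_low_congr (by rw [← hxodef]; ring) hc)) (by omega)
      exact ⟨a, b, hab, mk a ha, mk b hb⟩
  · rcases IHuh with ⟨z1, z2, h12, hc1, hc2⟩ | ⟨z0, hc0⟩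
    · have mkRC : ∀ z', z' ≠ xo → IsCombOfAtMost (SS F ρ) (ρ+1) (low ρ v z') →
          IsCombOfAtMost (SS F (ρ+1)) (ρ+1+1) (upd (ρ+1) v (xe^2/(xo - z'))) := by
        intro z' hz' hcz
        have hs : xo - z' ≠ 0 := sub_ne_zero.2 (Ne.symm hz')
        refine routeRC v _ (div_ne_zero (pow_ne_zero 2 hxe0) hs) hxe0
          (comb_low_congr ?_ hcz)
        rw [← hxodef, ← hxedef, div_div_self₂ hxe0 hs]
        ring
      by_cases h1 : z1 = xo
      · have h2 : z2 ≠ xo := by rw [← h1]; exact (Ne.symm h12)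
        have hs2 : xo - z2 ≠ 0 := sub_ne_zero.2 (Ne.symm h2)
        left
        refine ⟨0, xe^2/(xo - z2),
          (Ne.symm (div_ne_zero (pow_ne_zero 2 hxe0) hs2)), ?_, mkRC z2 h2 hc2⟩
        exact comb_mono' (routeRT v (comb_low_congr (by rw [← hxodef, ← h1]) hc1)) (by omega)
      · by_cases h2 : z2 = xo
        · left
          have hs1 : xo - z1 ≠ 0 := sub_ne_zero.2 (Ne.symm h1)
          refine ⟨0, xe^2/(xo - z1),
            (Ne.symm (div_ne_zero (pow_ne_zero 2 hxe0) hs1)), ?_, mkRC z1 h1 hc1⟩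
          exact comb_mono' (routeRT v (comb_low_congr (by rw [← hxodef, ← h2]) hc2)) (by omega)
        · left
          have hs1 : xo - z1 ≠ 0 := sub_ne_zero.2 (Ne.symm h1)
          have hs2 : xo - z2 ≠ 0 := sub_ne_zero.2 (Ne.symm h2)
          refine ⟨xe^2/(xo - z1), xe^2/(xo - z2), ?_, mkRC z1 h1 hc1, mkRC z2 h2 hc2⟩
          refine div_ne_div hxe0 hs1 hs2 ?_
          intro hee
          exact h12 (by linear_combination -hee)
    · right
      by_cases h0 : z0 = xo
      · exact ⟨0, comb_mono' (routeRT v (comb_low_congr (by rw [← hxodef, ← h0]) hc0))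
          (by omega)⟩
      · have hs : xo - z0 ≠ 0 := sub_ne_zero.2 (Ne.symm h0)
        refine ⟨xe^2/(xo - z0),
          comb_mono' (routeRC v _ (div_ne_zero (pow_ne_zero 2 hxe0) hs) hxe0
            (comb_low_congr ?_ hc0)) (by omega)⟩
        rw [← hxodef, ← hxedef, div_div_self₂ hxe0 hs]
        ring

lemma stepUN {ρ : ℕ} (h3 : Three F) (ud : UD F ρ) (un : UN F ρ) : UN F (ρ+1) := by
  intro v w
  set xo := v ⟨2*ρ+1, by omega⟩ with hxodef
  set xe := v ⟨2*ρ+2, by omega⟩ with hxedef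
  have IHun := un (low ρ v 0) xo
  simp only [upd_low] at IHun
  by_cases hxe0 : xe = 0
  · rcases IHun with hc | ⟨z', hz', hc⟩
    · by_cases hw : w = 0
      · left
        rw [hw]
        exact comb_mono' (routeR0 v hxe0 (comb_low_congr (by rw [← hxodef]) hc)) (by omega)
      · right
        exact ⟨0, Ne.symm hw, routeR0 v hxe0 (comb_low_congr (by rw [← hxodef]) hc)⟩
    · by_cases hw : w = 0
      · left
        rw [hw]
        exact comb_mono' (routeR0 v hxe0 (ud _)) (by omega)
      · left
        have hs : xo - z' ≠ 0 := sub_ne_zero.2 (Ne.symm hz')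
        obtain ⟨a, b, ha, hb, hab, hm⟩ :=
          exists_prod h3 (neg_ne_zero.2 (div_ne_zero hw hs)) (m := -(w/(xo - z')))
        exact comb_mono' (routeR2 v w (xo - z') hw hs a b ha hb hab hm hxe0
          (comb_low_congr (by rw [← hxodef]; ring) hc)) (by omega)
  · rcases IHun with hc | ⟨z', hz', hc⟩
    · by_cases hw : w = 0
      · left
        rw [hw]
        exact comb_mono' (routeRT v (comb_low_congr (by rw [← hxodef]) hc)) (by omega)
      · have IHun2 := un (low ρ v 0) (xo - xe^2/w)
        simp only [upd_low] at IHun2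
        rcases IHun2 with hc' | ⟨z'', hz'', hc''⟩
        · left
          refine comb_mono' (routeRC v w hw hxe0 (comb_low_congr ?_ hc'))
            (by omega)
          rw [← hxodef, ← hxedef]
        · by_cases hzx : z'' = xo
          · right
            exact ⟨0, Ne.symm hw, routeRT v (comb_low_congr (by rw [← hxodef, ← hzx]) hc'')⟩
          · right
            have hs : xo - z'' ≠ 0 := sub_ne_zero.2 (Ne.symm hzx)
            refine ⟨xe^2/(xo - z''), ?_, ?_⟩
            · intro heq
              apply hz''
              rw [← heq, div_div_self₂ hxe0 hs]
              ring
            · refine routeRC v _ (div_ne_zero (pow_ne_zero 2 hxe0) hs) hxe0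
                (comb_low_congr ?_ hc'')
              rw [← hxodef, ← hxedef, div_div_self₂ hxe0 hs]
              ring
    · have hs : xo - z' ≠ 0 := sub_ne_zero.2 (Ne.symm hz')
      have hcRC : IsCombOfAtMost (SS F (ρ+1)) (ρ+1) (upd (ρ+1) v (xe^2/(xo - z'))) := by
        refine routeRC v _ (div_ne_zero (pow_ne_zero 2 hxe0) hs) hxe0
          (comb_low_congr ?_ hc)
        rw [← hxodef, ← hxedef, div_div_self₂ hxe0 hs]
        ring
      by_cases hzw : xe^2/(xo - z') = w
      · left
        rw [← hzw]
        exact comb_mono' hcRC (by omega)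
      · right
        exact ⟨xe^2/(xo - z'), hzw, hcRC⟩

lemma upper_all (h3 : Three F) : ∀ ρ : ℕ, UD F ρ ∧ UH F ρ ∧ UN F ρ := by
  intro ρ
  induction ρ with
  | zero => exact ⟨baseUD, baseUH, baseUN⟩
  | succ n ih =>
    obtain ⟨ud, uh, un⟩ := ih
    exact ⟨stepUD h3 ud uh, stepUH h3 ud uh un, stepUN h3 ud un⟩

/-! ### lower bound -/

lemma comb_res {ρ : ℕ} (t : Finset (Fin (2*(ρ+1)+2) → F)) (co : (Fin (2*(ρ+1)+2) → F) → F)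
    (h : ↑t ⊆ iot ρ '' SS F ρ) :
    IsCombOfAtMost (SS F ρ) t.card (res ρ (∑ p ∈ t, co p • p)) := by
  classical
  have hid : ∀ p ∈ t, iot ρ (res ρ p) = p := by
    intro p hp
    obtain ⟨q, _, rfl⟩ := h hp
    rw [res_iot]
  refine ⟨t.image (res ρ), fun q => co (iot ρ q), ?_, Finset.card_image_le, ?_⟩
  · intro q hq
    simp only [Finset.coe_image] at hq
    obtain ⟨p, hp, rfl⟩ := hq
    obtain ⟨u, hu, rfl⟩ := h hp
    rw [res_iot]
    exact hu
  · rw [res_sum]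
    rw [Finset.sum_image (by
      intro p1 h1 p2 h2 he
      rw [← hid p1 h1, ← hid p2 h2, he])]
    exact Finset.sum_congr rfl fun p hp => by simp only [hid p hp]

/-- the flat vector: 1 on even coordinates, 0 on odd ones -/
def phi (F : Type) [Field F] (ρ : ℕ) : Fin (2*ρ+2) → F :=
  fun i => if (i:ℕ) % 2 = 0 then 1 else 0

lemma SS_partition {ρ : ℕ} {p : Fin (2*(ρ+1)+2) → F} (hp : p ∈ SS F (ρ+1)) :
    p ∈ iot ρ '' SS F ρ ∨ (∃ a : F, a ≠ 0 ∧ p = ptC F (ρ+1) (ρ+1) a)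
      ∨ p = unitV F (2*(ρ+1)+2) (2*(ρ+1)) := by
  obtain ⟨hp1, hp2⟩ := hp
  simp only [Set.mem_singleton_iff] at hp2
  rcases mem_constructionS_iff.1 hp1 with h | ⟨a, ha, h⟩ | ⟨u, hu, hu2, a, ha, h⟩
    | ⟨u, hu, hu2, h⟩ | h
  · exact Or.inl ⟨_, pt0_mem, by rw [h, iot_pt0]⟩
  · exact Or.inl ⟨_, ptL_mem ha, by rw [h, iot_ptL]⟩
  · rcases Nat.lt_or_ge u (ρ+1) with hu3 | hu3
    · exact Or.inl ⟨_, ptC_mem hu (by omega) ha, by rw [h, iot_ptC (by omega)]⟩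
    · have : u = ρ+1 := by omega
      exact Or.inr (Or.inl ⟨a, ha, by rw [h, this]⟩)
  · rcases Nat.lt_or_ge u (ρ+1) with hu3 | hu3
    · exact Or.inl ⟨_, ptT_mem hu (by omega), by rw [h, iot_ptT (by omega)]⟩
    · have : u = ρ+1 := by omega
      exact Or.inr (Or.inr (by rw [h, this]))
  · exact absurd h hp2

lemma block_low {ρ : ℕ} {p : Fin (2*(ρ+1)+2) → F} (hp : p ∈ SS F (ρ+1))
    (hnp : p ∉ iot ρ '' SS F ρ) {i : Fin (2*(ρ+1)+2)} (hi : (i:ℕ) ≤ 2*ρ) : p i = 0 := by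
  rcases SS_partition hp with h | ⟨a, ha, rfl⟩ | rfl
  · exact absurd h hnp
  · rw [ptC_top_apply, if_neg (by omega), if_neg (by omega), if_neg (by omega)]
  · rw [ptT_top_apply, if_neg (by omega)]

lemma iot_high {ρ : ℕ} (q : Fin (2*ρ+2) → F) {i : Fin (2*(ρ+1)+2)}
    (hi : 2*ρ+2 ≤ (i:ℕ)) : iot ρ q i = 0 := dif_neg (by omega)

lemma sum_coord {d : ℕ} (t : Finset (Fin d → F)) (co : (Fin d → F) → F) (i : Fin d) :
    (∑ p ∈ t, co p • p) i = ∑ p ∈ t, co p * p i := by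
  simp [Finset.sum_apply]

lemma flat : ∀ ρ : ℕ, ∀ z : F, ¬ IsCombOfAtMost (SS F ρ) ρ (upd ρ (phi F ρ) z) := by
  intro ρ
  induction ρ with
  | zero =>
    rintro z ⟨t, co, hsub, hcard, heq⟩
    rw [Nat.le_zero, Finset.card_eq_zero] at hcard
    subst hcard
    rw [Finset.sum_empty] at heq
    have this1 := congrFun heq ⟨0, by omega⟩
    simp only [upd, phi, Pi.zero_apply, fin_val_mk] at this1
    norm_num at this1
  | succ ρ ih =>
    rintro z ⟨t, co, hsub, hcard, heq⟩
    classical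
    set tl := t.filter (fun p => p ∈ iot ρ '' SS F ρ) with htl
    set tb := t.filter (fun p => ¬ (p ∈ iot ρ '' SS F ρ)) with htb
    set B : Fin (2*(ρ+1)+2) → F := ∑ p ∈ tb, co p • p with hB
    set L : Fin (2*(ρ+1)+2) → F := ∑ p ∈ tl, co p • p with hL
    have hsplit : L + B = upd (ρ+1) (phi F (ρ+1)) z := by
      rw [heq, hL, hB, htl, htb]
      exact Finset.sum_filter_add_sum_filter_not t _ _
    have hLhigh : ∀ i : Fin (2*(ρ+1)+2), 2*ρ+2 ≤ (i:ℕ) → L i = 0 := by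
      intro i hi
      rw [hL, sum_coord]
      refine Finset.sum_eq_zero fun p hp => ?_
      obtain ⟨q, _, rfl⟩ := (Finset.mem_filter.1 hp).2
      rw [iot_high q hi, mul_zero]
    have hBlow : ∀ i : Fin (2*(ρ+1)+2), (i:ℕ) ≤ 2*ρ → B i = 0 := by
      intro i hi
      rw [hB, sum_coord]
      refine Finset.sum_eq_zero fun p hp => ?_
      have hm := Finset.mem_filter.1 hp
      rw [block_low (hsub hm.1) hm.2 hi, mul_zero]
    -- tb is nonempty: coordinate 2ρ+2 of the target is 1
    have hV22 : upd (ρ+1) (phi F (ρ+1)) z ⟨2*ρ+2, by omega⟩ = 1 := by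
      simp only [upd, phi, fin_val_mk]
      rw [if_neg (by omega), if_pos (by omega)]
    have hB22 : B ⟨2*ρ+2, by omega⟩ = 1 := by
      have := congrFun hsplit ⟨2*ρ+2, by omega⟩
      rw [Pi.add_apply, hLhigh _ (by simp [fin_val_mk]), zero_add] at this
      rw [this, hV22]
    have htbne : tb.Nonempty := by
      rcases Finset.eq_empty_or_nonempty tb with h | h
      · rw [h, Finset.sum_empty] at hB
        rw [hB] at hB22
        exact absurd hB22.symm one_ne_zero
      · exact h
    have hcardtl : tl.card ≤ ρ := by
      have h1 : tl.card + tb.card = t.card := Finset.card_filter_add_card_filter_not _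
      have h2 : 1 ≤ tb.card := Finset.card_pos.2 htbne
      omega
    -- the residual is a flat vector at level ρ
    set s := B ⟨2*ρ+1, by omega⟩ with hs
    have key : res ρ (upd (ρ+1) (phi F (ρ+1)) z - B) = upd ρ (phi F ρ) (-s) := by
      funext i
      simp only [res, Pi.sub_apply]
      by_cases h1 : (i:ℕ) = 2*ρ+1
      · have e1 : Fin.castLE (by omega) i = (⟨2*ρ+1, by omega⟩ : Fin (2*(ρ+1)+2)) :=
          Fin.ext h1
        rw [e1]
        simp only [upd, phi, fin_val_mk]
        rw [if_neg (by omega), if_neg (by omega), if_pos h1, zero_sub]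
      · have hi : (i:ℕ) ≤ 2*ρ := by have := i.isLt; omega
        rw [hBlow _ (by simpa using hi), sub_zero]
        simp only [upd, phi, Fin.coe_castLE]
        rw [if_neg (by omega), if_neg h1]
    have hLVB : L = upd (ρ+1) (phi F (ρ+1)) z - B := by
      rw [← hsplit]; abel
    have hres := comb_res tl co (by
      intro p hp
      rw [Finset.mem_coe, htl, Finset.mem_filter] at hp
      exact hp.2)
    rw [← hL, hLVB, key] at hres
    exact ih (-s) (comb_mono hcardtl hres)

/-- the witness vector needing `ρ+2` points -/
def wit (F : Type) [Field F] (ρ : ℕ) : Fin (2*ρ+2) → F :=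
  fun i => if (i:ℕ) = 2*ρ+1 then 1 else if (i:ℕ) = 2*ρ then 0
    else if (i:ℕ) = 2*ρ-1 then 0 else if (i:ℕ) % 2 = 0 then 1 else 0

lemma base_coord0 {p : Fin (2*0+2) → F} (hp : p ∈ SS F 0) : p ⟨0, by omega⟩ = 1 := by
  rcases mem_constructionS_iff.1 hp.1 with h | ⟨a, ha, h⟩ | ⟨u, hu, hu2, a, ha, h⟩
    | ⟨u, hu, hu2, h⟩ | h
  · rw [h]; simp [unitV]
  · rw [h]; simp [ptL]
  · omega
  · omega
  · exact absurd h (by simpa using hp.2)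

lemma lower : ∀ ρ : ℕ, ¬ IsCombOfAtMost (SS F ρ) (ρ+1) (wit F ρ) := by
  intro ρ
  induction ρ with
  | zero =>
    rintro ⟨t, co, hsub, hcard, heq⟩
    have h1 : wit F 0 ⟨1, by omega⟩ = 1 := by
      simp [wit, fin_val_mk]
    have h0 : wit F 0 ⟨0, by omega⟩ = 0 := by
      simp [wit, fin_val_mk]
    rcases t.eq_empty_or_nonempty with rfl | ⟨p, hp⟩
    · rw [Finset.sum_empty] at heq
      rw [heq] at h1
      simp at h1
    · have ht : t = {p} := by
        refine Finset.eq_singleton_iff_unique_mem.2 ⟨hp, fun x hx => ?_⟩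
        exact Finset.card_le_one.1 hcard x hx p hp
      have hpS : p ∈ SS F 0 := hsub hp
      have hp0 : p ⟨0, by omega⟩ = 1 := base_coord0 hpS
      rw [ht, Finset.sum_singleton] at heq
      have e0 := congrFun heq ⟨0, by omega⟩
      rw [h0, Pi.smul_apply, smul_eq_mul, hp0, mul_one] at e0
      have e1 := congrFun heq ⟨1, by omega⟩
      rw [h1, Pi.smul_apply, smul_eq_mul, ← e0, zero_mul] at e1
      exact one_ne_zero e1
  | succ ρ ih =>
    rintro ⟨t, co, hsub, hcard, heq⟩
    classical
    set tl := t.filter (fun p => p ∈ iot ρ '' SS F ρ) with htl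
    set tb := t.filter (fun p => ¬ (p ∈ iot ρ '' SS F ρ)) with htb
    set B : Fin (2*(ρ+1)+2) → F := ∑ p ∈ tb, co p • p with hB
    set L : Fin (2*(ρ+1)+2) → F := ∑ p ∈ tl, co p • p with hL
    have hsplit : L + B = wit F (ρ+1) := by
      rw [heq, hL, hB, htl, htb]
      exact Finset.sum_filter_add_sum_filter_not t _ _
    have hLhigh : ∀ i : Fin (2*(ρ+1)+2), 2*ρ+2 ≤ (i:ℕ) → L i = 0 := by
      intro i hi
      rw [hL, sum_coord]
      refine Finset.sum_eq_zero fun p hp => ?_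
      obtain ⟨q, _, rfl⟩ := (Finset.mem_filter.1 hp).2
      rw [iot_high q hi, mul_zero]
    have hBlow : ∀ i : Fin (2*(ρ+1)+2), (i:ℕ) ≤ 2*ρ → B i = 0 := by
      intro i hi
      rw [hB, sum_coord]
      refine Finset.sum_eq_zero fun p hp => ?_
      have hm := Finset.mem_filter.1 hp
      rw [block_low (hsub hm.1) hm.2 hi, mul_zero]
    set s := B ⟨2*ρ+1, by omega⟩ with hs
    -- residual at lower level is flat
    have key : res ρ (wit F (ρ+1) - B) = upd ρ (phi F ρ) (-s) := by
      funext i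
      simp only [res, Pi.sub_apply]
      by_cases h1 : (i:ℕ) = 2*ρ+1
      · have e1 : Fin.castLE (by omega) i = (⟨2*ρ+1, by omega⟩ : Fin (2*(ρ+1)+2)) :=
          Fin.ext h1
        have f1 : ¬ (2*ρ+1 = 2*(ρ+1)+1) := by omega
        have f2 : ¬ (2*ρ+1 = 2*(ρ+1)) := by omega
        have f3 : (2*ρ+1 : ℕ) = 2*(ρ+1)-1 := by omega
        rw [e1]
        simp only [wit, upd, phi, fin_val_mk, h1]
        simp [hs]
      · have hi : (i:ℕ) ≤ 2*ρ := by have := i.isLt; omega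
        rw [hBlow _ (by simpa using hi), sub_zero]
        have f1 : ¬ ((i:ℕ) = 2*(ρ+1)+1) := by omega
        have f2 : ¬ ((i:ℕ) = 2*(ρ+1)) := by omega
        have f3 : ¬ ((i:ℕ) = 2*(ρ+1)-1) := by omega
        simp only [wit, upd, phi, Fin.coe_castLE]
        rw [if_neg f1, if_neg f2, if_neg f3, if_neg h1]
    have hLVB : L = wit F (ρ+1) - B := by rw [← hsplit]; abel
    have hres := comb_res tl co (by
      intro p hp
      rw [Finset.mem_coe, htl, Finset.mem_filter] at hp
      exact hp.2)
    rw [← hL, hLVB, key] at hres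
    have hge : ρ + 1 ≤ tl.card := by
      by_contra hlt
      exact flat ρ (-s) (comb_mono (by omega) hres)
    have hcards : tl.card + tb.card = t.card := Finset.card_filter_add_card_filter_not _
    have htb1 : tb.card ≤ 1 := by omega
    -- B must produce 1 at the very top coordinate, 0 at coordinate 2ρ+2
    have hVtop : wit F (ρ+1) ⟨2*ρ+3, by omega⟩ = 1 := by
      have f1 : (2*ρ+3 : ℕ) = 2*(ρ+1)+1 := by omega
      simp only [wit, fin_val_mk]
      rw [if_pos f1]
    have hVe : wit F (ρ+1) ⟨2*ρ+2, by omega⟩ = 0 := by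
      have f1 : ¬ (2*ρ+2 = 2*(ρ+1)+1) := by omega
      have f2 : (2*ρ+2 : ℕ) = 2*(ρ+1) := by omega
      simp only [wit, fin_val_mk]
      rw [if_neg f1, if_pos f2]
    have hBtop : B ⟨2*ρ+3, by omega⟩ = 1 := by
      have h := congrFun hsplit ⟨2*ρ+3, by omega⟩
      rw [Pi.add_apply, hLhigh _ (by simp only [fin_val_mk]; omega), zero_add, hVtop] at h
      exact h
    have hBe : B ⟨2*ρ+2, by omega⟩ = 0 := by
      have h := congrFun hsplit ⟨2*ρ+2, by omega⟩
      rw [Pi.add_apply, hLhigh _ (by simp only [fin_val_mk]; omega), zero_add, hVe] at h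
      exact h
    -- case analysis on tb
    rcases tb.eq_empty_or_nonempty with hemp | ⟨p, hp⟩
    · rw [hemp, Finset.sum_empty] at hB
      rw [hB] at hBtop
      exact one_ne_zero hBtop.symm
    · have htbs : tb = {p} := by
        refine Finset.eq_singleton_iff_unique_mem.2 ⟨hp, fun x hx => ?_⟩
        exact Finset.card_le_one.1 htb1 x hx p hp
      rw [htbs, Finset.sum_singleton] at hB
      have hpm := Finset.mem_filter.1 hp
      rcases SS_partition (hsub hpm.1) with h | ⟨a, ha, rfl⟩ | rfl
      · exact hpm.2 h
      · have he := hBe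
        rw [hB, Pi.smul_apply, smul_eq_mul, ptC_top_e] at he
        have hc0 : co (ptC F (ρ+1) (ρ+1) a) = 0 := by
          rcases mul_eq_zero.1 he with h' | h'
          · exact h'
          · exact absurd h' ha
        have ht := hBtop
        rw [hB, Pi.smul_apply, smul_eq_mul, ptC_top_z, hc0, zero_mul] at ht
        exact one_ne_zero ht.symm
      · have ht := hBtop
        rw [hB, Pi.smul_apply, smul_eq_mul, ptT_top_z, mul_zero] at ht
        exact one_ne_zero ht.symm

/-! ### cardinality -/

open Classical in
noncomputable def gfun (F : Type) [Field F] (ρ : ℕ) : ℕ × F → (Fin (2*ρ+2) → F) :=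
  fun p => if p.1 = 0 then (if p.2 = 0 then unitV F (2*ρ+2) 0 else ptL F ρ p.2)
    else (if p.2 = 0 then unitV F (2*ρ+2) (2*p.1) else ptC F ρ p.1 p.2)

lemma unitV_at {d k n : ℕ} (h : n < d) : unitV F d k ⟨n, h⟩ = if n = k then 1 else 0 := rfl
lemma ptL_at {ρ : ℕ} (a : F) {n : ℕ} (h : n < 2*ρ+2) :
    ptL F ρ a ⟨n, h⟩ = if n = 0 then 1 else if n = 1 then a else 0 := rfl
lemma ptC_at {ρ u : ℕ} (a : F) {n : ℕ} (h : n < 2*ρ+2) :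
    ptC F ρ u a ⟨n, h⟩ = if n = 2*u-1 then 1 else if n = 2*u then a
      else if n = 2*u+1 then a^2 else 0 := rfl

lemma gfun_at0 {ρ u : ℕ} {a : F} (hu : u ≤ ρ) :
    gfun F ρ (u, a) ⟨0, by omega⟩ = if u = 0 then 1 else 0 := by
  by_cases h : u = 0
  · rw [if_pos h]
    by_cases ha : a = 0 <;> simp [gfun, h, ha, unitV, ptL]
  · rw [if_neg h]
    have h1 : ¬ ((0:ℕ) = 2*u) := by omega
    have h2 : ¬ ((0:ℕ) = 2*u-1) := by omega
    have h3 : ¬ ((0:ℕ) = 2*u+1) := by omega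
    by_cases ha : a = 0 <;> simp [gfun, h, ha, unitV, ptC, h1, h2, h3]

open Classical in
lemma gfun_inj [Fintype F] {ρ : ℕ} : Set.InjOn (gfun F ρ)
    ↑((Finset.range (ρ+1)) ×ˢ (Finset.univ : Finset F)) := by
  classical
  rintro ⟨u, a⟩ hm ⟨u', a'⟩ hm' heq
  simp only [Finset.coe_product, Set.mem_prod, Finset.mem_coe, Finset.mem_range] at hm hm'
  have hu : u ≤ ρ := by omega
  have hu' : u' ≤ ρ := by omega
  have h0 := congrFun heq ⟨0, by omega⟩
  rw [gfun_at0 hu, gfun_at0 hu'] at h0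
  by_cases hz : u = 0
  · have hz' : u' = 0 := by
      by_contra hz'
      rw [if_pos hz, if_neg hz'] at h0
      exact one_ne_zero h0
    -- compare coordinate 1
    have h1 := congrFun heq ⟨1, by omega⟩
    have e1 : ∀ b : F, gfun F ρ (0, b) ⟨1, by omega⟩ = b := by
      intro b
      by_cases hb : b = 0 <;> simp [gfun, hb, unitV, ptL]
    rw [hz, hz'] at h1
    rw [e1, e1] at h1
    rw [hz, hz', h1]
  · have hz' : u' ≠ 0 := by
      by_contra hz'
      rw [if_neg hz, if_pos (by simpa using hz')] at h0
      exact zero_ne_one h0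
    have hu1 : 1 ≤ u := by omega
    have hu1' : 1 ≤ u' := by omega
    -- evaluations at coordinates 2u and 2u-1
    have eT2u : ∀ u'' , 1 ≤ u'' → u'' ≤ ρ → (unitV F (2*ρ+2) (2*u'') ⟨2*u, by omega⟩ : F)
        = if u'' = u then 1 else 0 := by
      intro u'' h1 h2
      rw [unitV_at]
      by_cases h : u'' = u
      · rw [if_pos (by omega), if_pos h]
      · rw [if_neg (by omega), if_neg h]
    have eC2u : ∀ u'' (b : F), 1 ≤ u'' → u'' ≤ ρ → ptC F ρ u'' b ⟨2*u, by omega⟩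
        = if u'' = u then b else 0 := by
      intro u'' b h1 h2
      rw [ptC_at]
      by_cases h : u'' = u
      · rw [if_neg (by omega), if_pos (by omega), if_pos h]
      · rw [if_neg (by omega), if_neg (by omega), if_neg (by omega), if_neg h]
    have h2u := congrFun heq ⟨2*u, by omega⟩
    by_cases ha : a = 0 <;> by_cases ha' : a' = 0
    · -- both torch points
      simp only [gfun, if_neg hz, if_neg hz', if_pos ha, if_pos ha'] at h2u heq
      rw [eT2u u hu1 hu, eT2u u' hu1' hu', if_pos rfl] at h2u
      by_cases h : u' = u
      · rw [h, ha, ha']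
      · rw [if_neg h] at h2u
        exact absurd h2u one_ne_zero
    · -- T vs conic
      exfalso
      simp only [gfun, if_neg hz, if_neg hz', if_pos ha, if_neg ha'] at h2u heq
      rw [eT2u u hu1 hu, eC2u u' a' hu1' hu', if_pos rfl] at h2u
      by_cases h : u' = u
      · rw [if_pos h] at h2u
        -- 1 = a' ; now compare coordinate 2u-1
        have h2m := congrFun heq ⟨2*u-1, by omega⟩
        rw [unitV_at, ptC_at, if_neg (by omega), h, if_pos rfl] at h2m
        exact zero_ne_one h2m
      · rw [if_neg h] at h2u
        exact one_ne_zero h2u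
    · exfalso
      simp only [gfun, if_neg hz, if_neg hz', if_neg ha, if_pos ha'] at h2u heq
      rw [eC2u u a hu1 hu, eT2u u' hu1' hu', if_pos rfl] at h2u
      by_cases h : u' = u
      · rw [if_pos h] at h2u
        have h2m := congrFun heq ⟨2*u-1, by omega⟩
        rw [unitV_at, ptC_at, if_pos rfl, h, if_neg (by omega)] at h2m
        exact one_ne_zero h2m
      · rw [if_neg h] at h2u
        exact ha h2u
    · -- conic vs conic
      simp only [gfun, if_neg hz, if_neg hz', if_neg ha, if_neg ha'] at h2u heq
      rw [eC2u u a hu1 hu, eC2u u' a' hu1' hu', if_pos rfl] at h2u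
      by_cases h : u' = u
      · rw [if_pos h] at h2u
        rw [h, h2u]
      · rw [if_neg h] at h2u
        exact absurd h2u ha

open Classical in
lemma SS_eq_image [Fintype F] {ρ : ℕ} :
    SS F ρ = ↑(((Finset.range (ρ+1)) ×ˢ (Finset.univ : Finset F)).image (gfun F ρ)) := by
  classical
  ext p
  simp only [Finset.coe_image, Set.mem_image, Finset.mem_coe, Finset.mem_product,
    Finset.mem_range, Finset.mem_univ]
  constructor
  · rintro ⟨hp1, hp2⟩
    simp only [Set.mem_singleton_iff] at hp2
    rcases mem_constructionS_iff.1 hp1 with h | ⟨a, ha, h⟩ | ⟨u, hu, hu2, a, ha, h⟩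
      | ⟨u, hu, hu2, h⟩ | h
    · exact ⟨(0, 0), by simp [Finset.mem_product], by rw [h]; simp [gfun]⟩
    · exact ⟨(0, a), by simp [Finset.mem_product], by rw [h]; simp [gfun, ha]⟩
    · exact ⟨(u, a), by simp [Finset.mem_product]; omega,
        by rw [h]; simp [gfun, ha, show ¬ u = 0 from by omega]⟩
    · exact ⟨(u, 0), by simp [Finset.mem_product]; omega,
        by rw [h]; simp [gfun, show ¬ u = 0 from by omega]⟩
    · exact absurd h hp2
  · rintro ⟨⟨u, a⟩, hm, rfl⟩
    simp only [Finset.mem_product, Finset.mem_range, Finset.mem_univ] at hm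
    have hu : u ≤ ρ := by omega
    by_cases hz : u = 0 <;> by_cases ha : a = 0
    · simpa [gfun, hz, ha] using pt0_mem
    · simpa [gfun, hz, ha] using ptL_mem ha
    · simpa [gfun, hz, ha] using ptT_mem (by omega) hu
    · simpa [gfun, hz, ha] using ptC_mem (by omega) hu ha

open Classical in
lemma SS_ncard [Fintype F] {ρ q : ℕ} (hF : Fintype.card F = q) :
    (SS F ρ).ncard = (ρ+1) * q := by
  classical
  rw [SS_eq_image, Set.ncard_coe_finset,
    Finset.card_image_of_injOn (by simpa using gfun_inj), Finset.card_product,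
    Finset.card_range, Finset.card_univ, hF]

/-! ### existence of three distinct nonzero elements -/

lemma three_of_card [Fintype F] (h : 4 ≤ Fintype.card F) : Three F := by
  classical
  have h0 : 3 ≤ (Finset.univ.erase (0:F)).card := by
    rw [Finset.card_erase_of_mem (Finset.mem_univ _), Finset.card_univ]
    omega
  obtain ⟨a, ha⟩ := Finset.card_pos.1 (show 0 < (Finset.univ.erase (0:F)).card by omega)
  have h1 : 2 ≤ ((Finset.univ.erase (0:F)).erase a).card := by
    rw [Finset.card_erase_of_mem ha]
    omega
  obtain ⟨b, hb⟩ := Finset.card_pos.1 (show 0 < ((Finset.univ.erase (0:F)).erase a).card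
    by omega)
  have h2 : 1 ≤ (((Finset.univ.erase (0:F)).erase a).erase b).card := by
    rw [Finset.card_erase_of_mem hb]
    omega
  obtain ⟨c, hc⟩ := Finset.card_pos.1 (show 0 <
    (((Finset.univ.erase (0:F)).erase a).erase b).card by omega)
  obtain ⟨hcb, hca, hc0, -⟩ :
      c ≠ b ∧ c ≠ a ∧ c ≠ 0 ∧ True := by
    simp only [Finset.mem_erase] at hc
    exact ⟨hc.1, hc.2.1, hc.2.2.1, trivial⟩
  obtain ⟨hba, hb0, -⟩ : b ≠ a ∧ b ≠ 0 ∧ True := by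
    simp only [Finset.mem_erase] at hb
    exact ⟨hb.1, hb.2.1, trivial⟩
  have ha0 : a ≠ 0 := (Finset.mem_erase.1 ha).1
  exact ⟨a, b, c, ha0, hb0, hc0, Ne.symm hba, Ne.symm hca, Ne.symm hcb⟩

lemma wit_ne_zero {ρ : ℕ} : wit F ρ ≠ 0 := by
  intro h0
  have h := congrFun h0 ⟨2*ρ+1, by omega⟩
  simp only [wit, fin_val_mk, Pi.zero_apply, if_true] at h
  exact one_ne_zero h

end S11

/-- for a prime power `q = 4` or `q ≥ 7` and any `ρ ≥ 0`, the set
`S_ρ ∖ {A_ρ^∞}` of size `(ρ+1)q`, obtained from Construction S by removing the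
point `A_ρ^∞ = (0,…,0,1)`, is a `(ρ+1)`-saturating set in `PG(2ρ+1, q)`. -/
theorem stmt11 (q ρ : ℕ) (F : Type) [Field F] [Fintype F] (hF : Fintype.card F = q)
    (hq : q = 4 ∨ 7 ≤ q) :
    IsSaturatingSet (constructionS F ρ \ {unitV F (2 * ρ + 2) (2 * ρ + 1)}) (ρ + 1)
    ∧ (constructionS F ρ \ {unitV F (2 * ρ + 2) (2 * ρ + 1)}).ncard = (ρ + 1) * q := by
  have hq4 : 4 ≤ Fintype.card F := by
    rw [hF]
    rcases hq with h | h <;> omega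
  have h3 : S11.Three F := S11.three_of_card hq4
  refine ⟨⟨?_, ?_⟩, ?_⟩
  · intro v _
    exact (S11.upper_all h3 ρ).1 v
  · intro k hk hsat
    have hc := hsat (S11.wit F ρ) S11.wit_ne_zero
    exact S11.lower ρ (S11.comb_mono (by omega) hc)
  · exact S11.SS_ncard hF
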